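/- In an idempotent residuated chain, with monoidal preorder x ⊑ y defined by x·y = x: if x, y ≤ 1, then x ⊑ y and not y ⊑ x holds if and only if x < y; and if x, y ≥ 1, then x ⊑ y and not y ⊑ x holds if and only if y < x. -/
import Mathlib


/-- In an idempotent residuated chain: for negative `x, y`, `x ⊏ y` iff `x < y`;
for positive `x, y`, `x ⊏ y` iff `y < x` (where `x ⊏ y` means `x*y = x` and
`y*x ≠ y`). -/
theorem stmt11 {A : Type*} [LinearOrder A] [Monoid A]
    (ld rd : A → A → A)
    (resl : ∀ x y z : A, x * y ≤ z ↔ y ≤ ld x z)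
    (resr : ∀ x y z : A, x * y ≤ z ↔ x ≤ rd z y)
    (idem : ∀ x : A, x * x = x) :
    ∀ x y : A,
      (x ≤ 1 → y ≤ 1 → ((x * y = x ∧ ¬ y * x = y) ↔ x < y)) ∧
      (1 ≤ x → 1 ≤ y → ((x * y = x ∧ ¬ y * x = y) ↔ y < x)) := by
  have monoR : ∀ a b b' : A, b ≤ b' → a * b ≤ a * b' := by
    intro a b b' h
    exact (resl a b (a * b')).2 (le_trans h ((resl a b' (a * b')).1 le_rfl))
  have monoL : ∀ a a' b : A, a ≤ a' → a * b ≤ a' * b := by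
    intro a a' b h
    exact (resr a b (a' * b)).2 (le_trans h ((resr a' b (a' * b)).1 le_rfl))
  have neg : ∀ a b : A, a ≤ b → b ≤ 1 → a * b = a ∧ b * a = a := by
    intro a b hab hb1
    constructor
    · exact le_antisymm (by simpa using monoR a b 1 hb1)
        (by simpa [idem] using monoR a a b hab)
    · exact le_antisymm (by simpa using monoL b 1 a hb1)
        (by simpa [idem] using monoL a b a hab)
  have pos : ∀ a b : A, a ≤ b → 1 ≤ a → a * b = b ∧ b * a = b := by
    intro a b hab h1a
    constructor
    · exact le_antisymm (by simpa [idem] using monoL a b b hab)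
        (by simpa using monoL 1 a b h1a)
    · exact le_antisymm (by simpa [idem] using monoR b a b hab)
        (by simpa using monoR b 1 a h1a)
  intro x y
  constructor
  · intro hx hy
    constructor
    · rintro ⟨h1, h2⟩
      rcases lt_or_ge x y with h | h
      · exact h
      · exact absurd (neg y x h hx).1 h2
    · intro h
      have hn := neg x y h.le hy
      exact ⟨hn.1, fun e => h.ne' (by rw [← e, hn.2])⟩
  · intro hx hy
    constructor
    · rintro ⟨h1, h2⟩
      rcases lt_or_ge y x with h | h
      · exact h
      · exact absurd (pos x y h hx).2 h2
    · intro h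
      have hp := pos y x h.le hy
      exact ⟨hp.2, fun e => h.ne (by rw [← e, hp.1])⟩
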